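/- Let n and d be even positive integers with d ≤ n. Let A ⊆ {0,1}^n and B ⊆ {-1,0,1}^n be sets of vectors such that (i) every b ∈ B has exactly d nonzero entries, and (ii) for all a, a' ∈ A and b, b' ∈ B, if a + b = a' + b' (addition in ℤ^n) then a = a' and b = b'. Then |A| · |B| ≤ (n+1)^6 · 2^n · binomial(n, d/2). -/
import Mathlib
set_option maxHeartbeats 1000000

open Finset

private def yAux {n : ℕ} (a b : Fin n → ℤ) (i : Fin n) : ℤ :=
  if b i = 2 * a i - 1 then 1 - a i else a i

private def yAux' {n : ℕ} (a b : Fin n → ℤ) (i : Fin n) : ℤ :=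
  if b i = 1 - 2 * a i then 1 - a i else a i

private def Dset {n : ℕ} (a b : Fin n → ℤ) : Finset (Fin n) :=
  univ.filter (fun i => b i = 1 - 2 * a i)

private def Gset {n : ℕ} (a b : Fin n → ℤ) : Finset (Fin n) :=
  univ.filter (fun i => b i = 2 * a i - 1)

private lemma cross {n : ℕ} {a₁ b₁ a₂ b₂ : Fin n → ℤ}
    (hA1 : ∀ i, a₁ i = 0 ∨ a₁ i = 1) (hA2 : ∀ i, a₂ i = 0 ∨ a₂ i = 1)
    (hB1 : ∀ i, b₁ i = -1 ∨ b₁ i = 0 ∨ b₁ i = 1)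
    (hB2 : ∀ i, b₂ i = -1 ∨ b₂ i = 0 ∨ b₂ i = 1)
    (hy : ∀ i, (yAux a₁ b₁ i = 1 ↔ yAux a₂ b₂ i = 1))
    (hD : ∀ i, (b₁ i = 1 - 2 * a₁ i ↔ b₂ i = 1 - 2 * a₂ i)) :
    a₁ + b₂ = a₂ + b₁ := by
  funext i
  have h1 := hA1 i; have h2 := hA2 i; have h3 := hB1 i; have h4 := hB2 i
  have h5 := hy i; have h6 := hD i
  simp only [Pi.add_apply]
  unfold yAux at h5
  split_ifs at h5 <;> omega

private lemma direct {n : ℕ} {a₁ b₁ a₂ b₂ : Fin n → ℤ}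
    (hA1 : ∀ i, a₁ i = 0 ∨ a₁ i = 1) (hA2 : ∀ i, a₂ i = 0 ∨ a₂ i = 1)
    (hB1 : ∀ i, b₁ i = -1 ∨ b₁ i = 0 ∨ b₁ i = 1)
    (hB2 : ∀ i, b₂ i = -1 ∨ b₂ i = 0 ∨ b₂ i = 1)
    (hy : ∀ i, (yAux' a₁ b₁ i = 1 ↔ yAux' a₂ b₂ i = 1))
    (hG : ∀ i, (b₁ i = 2 * a₁ i - 1 ↔ b₂ i = 2 * a₂ i - 1)) :
    a₁ + b₁ = a₂ + b₂ := by
  funext i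
  have h1 := hA1 i; have h2 := hA2 i; have h3 := hB1 i; have h4 := hB2 i
  have h5 := hy i; have h6 := hG i
  simp only [Pi.add_apply]
  unfold yAux' at h5
  split_ifs at h5 <;> omega

private lemma GD_card {n d : ℕ} {a b : Fin n → ℤ} (hA : ∀ i, a i = 0 ∨ a i = 1)
    (hB : ∀ i, b i = -1 ∨ b i = 0 ∨ b i = 1)
    (hsupp : (univ.filter (fun i => b i ≠ 0)).card = d) :
    (Gset a b).card + (Dset a b).card = d := by
  rw [← hsupp, Gset, Dset, ← card_union_of_disjoint]
  · rw [← filter_or]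
    apply congrArg
    apply filter_congr
    intro i _
    have := hA i; have := hB i
    constructor
    · intro h; omega
    · intro h; omega
  · rw [disjoint_left]
    intro i hi1 hi2
    simp only [mem_filter] at hi1 hi2
    omega

private lemma choose_mono_half (n : ℕ) : ∀ l, l ≤ n / 2 → ∀ j, j ≤ l →
    n.choose j ≤ n.choose l := by
  intro l
  induction l with
  | zero => intro _ j hj; rw [Nat.le_zero.mp hj]
  | succ l ih =>
    intro hl j hj
    rcases Nat.lt_or_ge j (l + 1) with h | h
    · exact le_trans (ih (by omega) j (by omega))
        (Nat.choose_le_succ_of_lt_half_left (by omega))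
    · have : j = l + 1 := by omega
      simp [this]

/-- UDCP-style bound, even case, explicit polynomial factor. -/
theorem stmt1 (n d : ℕ) (hn : 0 < n) (hneven : Even n) (hd : 0 < d) (hdeven : Even d)
    (hdn : d ≤ n) (A B : Finset (Fin n → ℤ))
    (hA : ∀ a ∈ A, ∀ i, a i = 0 ∨ a i = 1)
    (hB : ∀ b ∈ B, ∀ i, b i = -1 ∨ b i = 0 ∨ b i = 1)
    (hBsupp : ∀ b ∈ B, (Finset.univ.filter (fun i => b i ≠ 0)).card = d)
    (hUDCP : ∀ a ∈ A, ∀ a' ∈ A, ∀ b ∈ B, ∀ b' ∈ B, a + b = a' + b' → a = a' ∧ b = b') :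
    A.card * B.card ≤ (n + 1) ^ 6 * 2 ^ n * n.choose (d / 2) := by
  classical
  set C := n.choose (d / 2) with hC
  set P : Finset ((Fin n → ℤ) × (Fin n → ℤ)) := A ×ˢ B with hP
  set P₁ := P.filter (fun p => (Dset p.1 p.2).card ≤ d / 2) with hP₁
  set P₂ := P.filter (fun p => ¬ (Dset p.1 p.2).card ≤ d / 2) with hP₂
  set T : Finset (Finset (Fin n)) :=
    (range (d / 2 + 1)).biUnion (fun j => powersetCard j (univ : Finset (Fin n))) with hT
  -- card of T
  have hTcard : T.card ≤ (d / 2 + 1) * C := by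
    calc T.card ≤ ∑ j ∈ range (d / 2 + 1), (powersetCard j (univ : Finset (Fin n))).card :=
          card_biUnion_le
      _ ≤ ∑ j ∈ range (d / 2 + 1), C := by
          apply Finset.sum_le_sum
          intro j hj
          rw [card_powersetCard, card_univ, Fintype.card_fin]
          exact choose_mono_half n (d / 2) (Nat.div_le_div_right hdn) j
            (by simpa using Nat.lt_succ_iff.mp (mem_range.mp hj))
      _ = (d / 2 + 1) * C := by rw [Finset.sum_const, card_range, smul_eq_mul]
  have hTarget : ((univ : Finset (Fin n → Bool)) ×ˢ T).card ≤ 2 ^ n * ((d / 2 + 1) * C) := by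
    rw [card_product]
    apply Nat.mul_le_mul
    · rw [card_univ]
      simp [Fintype.card_fun]
    · exact hTcard
  -- injection 1
  have h1 : P₁.card ≤ 2 ^ n * ((d / 2 + 1) * C) := by
    set Φ₁ : (Fin n → ℤ) × (Fin n → ℤ) → (Fin n → Bool) × Finset (Fin n) :=
      fun p => (fun i => decide (yAux p.1 p.2 i = 1), Dset p.1 p.2) with hΦ₁
    have hinj : Set.InjOn Φ₁ P₁ := by
      intro p hp q hq heq
      simp only [hP₁, coe_filter, Set.mem_setOf_eq] at hp hq
      have hpP := hp.1; have hqP := hq.1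
      rw [hP, mem_product] at hpP hqP
      have heq1 : (fun i => decide (yAux p.1 p.2 i = 1)) =
          (fun i => decide (yAux q.1 q.2 i = 1)) := congrArg Prod.fst heq
      have heq2 : Dset p.1 p.2 = Dset q.1 q.2 := congrArg Prod.snd heq
      have hy : ∀ i, (yAux p.1 p.2 i = 1 ↔ yAux q.1 q.2 i = 1) := by
        intro i
        have := congrFun heq1 i
        simpa [decide_eq_decide] using this
      have hD : ∀ i, (p.2 i = 1 - 2 * p.1 i ↔ q.2 i = 1 - 2 * q.1 i) := by
        intro i
        have := Finset.ext_iff.mp heq2 i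
        simpa [Dset, mem_filter] using this
      have := cross (hA p.1 hpP.1) (hA q.1 hqP.1) (hB p.2 hpP.2) (hB q.2 hqP.2) hy hD
      have hres := hUDCP p.1 hpP.1 q.1 hqP.1 q.2 hqP.2 p.2 hpP.2 this
      exact Prod.ext hres.1 hres.2.symm
    have himg : P₁.image Φ₁ ⊆ (univ : Finset (Fin n → Bool)) ×ˢ T := by
      intro x hx
      rw [mem_image] at hx
      obtain ⟨p, hp, rfl⟩ := hx
      rw [hP₁, mem_filter] at hp
      rw [mem_product]
      refine ⟨mem_univ _, ?_⟩
      rw [hT, mem_biUnion]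
      exact ⟨(Dset p.1 p.2).card, mem_range.mpr (by omega),
        mem_powersetCard.mpr ⟨subset_univ _, rfl⟩⟩
    calc P₁.card = (P₁.image Φ₁).card := (card_image_of_injOn hinj).symm
      _ ≤ ((univ : Finset (Fin n → Bool)) ×ˢ T).card := card_le_card himg
      _ ≤ 2 ^ n * ((d / 2 + 1) * C) := hTarget
  -- injection 2
  have h2 : P₂.card ≤ 2 ^ n * ((d / 2 + 1) * C) := by
    set Φ₂ : (Fin n → ℤ) × (Fin n → ℤ) → (Fin n → Bool) × Finset (Fin n) :=
      fun p => (fun i => decide (yAux' p.1 p.2 i = 1), Gset p.1 p.2) with hΦ₂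
    have hinj : Set.InjOn Φ₂ P₂ := by
      intro p hp q hq heq
      simp only [hP₂, coe_filter, Set.mem_setOf_eq] at hp hq
      have hpP := hp.1; have hqP := hq.1
      rw [hP, mem_product] at hpP hqP
      have heq1 : (fun i => decide (yAux' p.1 p.2 i = 1)) =
          (fun i => decide (yAux' q.1 q.2 i = 1)) := congrArg Prod.fst heq
      have heq2 : Gset p.1 p.2 = Gset q.1 q.2 := congrArg Prod.snd heq
      have hy : ∀ i, (yAux' p.1 p.2 i = 1 ↔ yAux' q.1 q.2 i = 1) := by
        intro i
        have := congrFun heq1 i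
        simpa [decide_eq_decide] using this
      have hG : ∀ i, (p.2 i = 2 * p.1 i - 1 ↔ q.2 i = 2 * q.1 i - 1) := by
        intro i
        have := Finset.ext_iff.mp heq2 i
        simpa [Gset, mem_filter] using this
      have := direct (hA p.1 hpP.1) (hA q.1 hqP.1) (hB p.2 hpP.2) (hB q.2 hqP.2) hy hG
      have hres := hUDCP p.1 hpP.1 q.1 hqP.1 p.2 hpP.2 q.2 hqP.2 this
      exact Prod.ext hres.1 hres.2
    have himg : P₂.image Φ₂ ⊆ (univ : Finset (Fin n → Bool)) ×ˢ T := by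
      intro x hx
      rw [mem_image] at hx
      obtain ⟨p, hp, rfl⟩ := hx
      rw [hP₂, mem_filter] at hp
      have hpP := hp.1
      rw [hP, mem_product] at hpP
      have hGD := GD_card (hA p.1 hpP.1) (hB p.2 hpP.2) (hBsupp p.2 hpP.2)
      have hcard : (Gset p.1 p.2).card ≤ d / 2 := by
        have := hp.2
        omega
      rw [mem_product]
      refine ⟨mem_univ _, ?_⟩
      rw [hT, mem_biUnion]
      exact ⟨(Gset p.1 p.2).card, mem_range.mpr (by omega),
        mem_powersetCard.mpr ⟨subset_univ _, rfl⟩⟩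
    calc P₂.card = (P₂.image Φ₂).card := (card_image_of_injOn hinj).symm
      _ ≤ ((univ : Finset (Fin n → Bool)) ×ˢ T).card := card_le_card himg
      _ ≤ 2 ^ n * ((d / 2 + 1) * C) := hTarget
  have hsplit : P₁.card + P₂.card = P.card := by
    have hdisj : Disjoint P₁ P₂ := by
      rw [Finset.disjoint_left]
      intro x h1 h2
      rw [hP₁, mem_filter] at h1
      rw [hP₂, mem_filter] at h2
      exact h2.2 h1.2
    have hunion : P₁ ∪ P₂ = P := by
      ext x
      rw [mem_union, hP₁, hP₂, mem_filter, mem_filter]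
      tauto
    rw [← card_union_of_disjoint hdisj, hunion]
  have hPcard : P.card = A.card * B.card := by rw [hP, card_product]
  have hkey : A.card * B.card ≤ 2 * (2 ^ n * ((d / 2 + 1) * C)) := by omega
  have hpoly : 2 * (d / 2 + 1) ≤ (n + 1) ^ 6 := by
    have h62 : (n + 1) ^ 2 ≤ (n + 1) ^ 6 := Nat.pow_le_pow_right (by omega) (by omega)
    have hsq : (n + 1) ^ 2 = n * n + 2 * n + 1 := by ring
    omega
  calc A.card * B.card ≤ 2 * (2 ^ n * ((d / 2 + 1) * C)) := hkey
    _ = (2 * (d / 2 + 1)) * (2 ^ n * C) := by ring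
    _ ≤ (n + 1) ^ 6 * (2 ^ n * C) := Nat.mul_le_mul_right _ hpoly
    _ = (n + 1) ^ 6 * 2 ^ n * C := by ring
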